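/- Let 0 < α < 1, let S₀ ≥ 0 and let m ≤ M be real numbers. Suppose Θ̲ ≤ Θ̄ are real numbers satisfying Θ̄ ≤ max(S₀, M − α·Θ̲) and Θ̲ ≥ min(−S₀, m − α·Θ̄). Then max(Θ̄, −Θ̲) ≤ S₀ + (2/(1−α²))·max(|M|, |m|). -/
import Mathlib


/-- Core of the uniform temperature bound (Theorem 3.1): if `0 < α < 1`, `S₀ ≥ 0`,
`m ≤ M`, and the numbers `Θ̲ ≤ Θ̄` satisfy `Θ̄ ≤ max(S₀, M − α·Θ̲)` and
`Θ̲ ≥ min(−S₀, m − α·Θ̄)`, then `max(Θ̄, −Θ̲) ≤ S₀ + (2/(1−α²))·max(|M|, |m|)`. -/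
theorem uniform_temperature_bound
    (α S₀ m M Θlo Θhi : ℝ)
    (hα0 : 0 < α) (hα1 : α < 1) (hS₀ : 0 ≤ S₀) (hmM : m ≤ M)
    (hΘ : Θlo ≤ Θhi)
    (hhi : Θhi ≤ max S₀ (M - α * Θlo))
    (hlo : Θlo ≥ min (-S₀) (m - α * Θhi)) :
    max Θhi (-Θlo) ≤ S₀ + (2 / (1 - α ^ 2)) * max |M| |m| := by
  set K := max |M| |m| with hK
  have hK0 : 0 ≤ K := le_trans (abs_nonneg M) (le_max_left _ _)
  have hMK : M ≤ K := le_trans (le_abs_self M) (le_max_left _ _)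
  have hmK : -m ≤ K := le_trans (neg_le_abs m) (le_max_right _ _)
  have h2 : 0 < 1 - α ^ 2 := by nlinarith
  set X := max Θhi (-Θlo) with hX
  have hAX : Θhi ≤ X := le_max_left _ _
  have hBX : -Θlo ≤ X := le_max_right _ _
  have hKX : 0 ≤ 2 / (1 - α ^ 2) * K :=
    mul_nonneg (div_nonneg (by norm_num) h2.le) hK0
  have key : X ≤ max S₀ (K + α * X) := by
    rcases max_cases Θhi (-Θlo) with ⟨hx, _⟩ | ⟨hx, _⟩ <;> rw [← hX] at hx
    · rcases le_max_iff.mp hhi with h | h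
      · exact le_max_of_le_left (hx ▸ h)
      · refine le_max_of_le_right ?_
        have : α * (-Θlo) ≤ α * X := by nlinarith
        nlinarith [hx ▸ h]
    · rcases min_cases (-S₀) (m - α * Θhi) with ⟨h, _⟩ | ⟨h, _⟩
      · rw [h] at hlo
        exact le_max_of_le_left (by linarith [hx ▸ neg_le_neg hlo])
      · rw [h] at hlo
        refine le_max_of_le_right ?_
        have : α * Θhi ≤ α * X := by nlinarith
        nlinarith [hx ▸ neg_le_neg hlo]
  rcases le_max_iff.mp key with h | h
  · linarith
  · have hX1 : X * (1 - α ^ 2) ≤ 2 * K := by nlinarith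
    have : X ≤ 2 * K / (1 - α ^ 2) := (le_div_iff₀ h2).mpr hX1
    have heq : 2 * K / (1 - α ^ 2) = 2 / (1 - α ^ 2) * K := by ring
    linarith [heq ▸ this]
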